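/- Let 0 < a < b < R be real numbers. Define the compressed coordinate transformation ζ : [0, b] → ℝ by ζ(r) = r for r ∈ [0, a) and ζ(r) = η(r) for r ∈ [a, b], where η(r) = (a²(R−b) + r(a² + (b−2a)R))/((b−r)(R−b) + (b−a)²). Then ζ is continuously differentiable on [0, b], ζ(r) > 0 for all r ∈ (0, b], and ζ is strictly increasing on [0, b] (indeed ζ'(r) > 0 for all r ∈ [0, b]). -/

import Mathlib

open Set Filter Topology

theorem stmt2 (a b R : ℝ) (ha : 0 < a) (hab : a < b) (hbR : b < R)
    (η ζ : ℝ → ℝ)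
    (hη : ∀ r : ℝ, η r =
      (a ^ 2 * (R - b) + r * (a ^ 2 + (b - 2 * a) * R)) / ((b - r) * (R - b) + (b - a) ^ 2))
    (hζ : ∀ r : ℝ, ζ r = if r < a then r else η r) :
    ContDiffOn ℝ 1 ζ (Set.Icc 0 b) ∧
    (∀ r ∈ Set.Ioc (0 : ℝ) b, 0 < ζ r) ∧
    StrictMonoOn ζ (Set.Icc 0 b) ∧
    (∀ r ∈ Set.Icc (0 : ℝ) b, 0 < deriv ζ r) := by
  have hRb : (0:ℝ) < R - b := by linarith
  have hba : (0:ℝ) < b - a := by linarith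
  set r₀ : ℝ := b + (b - a)^2 / (R - b) with hr₀
  have hbr₀ : b < r₀ := by
    have : 0 < (b - a)^2 / (R - b) := by positivity
    simp only [hr₀]; linarith
  set U : Set ℝ := Iio r₀ with hU
  have hUopen : IsOpen U := isOpen_Iio
  have hIccU : Icc (0:ℝ) b ⊆ U := fun r hr => lt_of_le_of_lt hr.2 hbr₀
  set D : ℝ → ℝ := fun r => (b - r) * (R - b) + (b - a)^2 with hDdef
  have hDpos : ∀ r ∈ U, 0 < D r := by
    intro r hr
    simp only [hU, mem_Iio, hr₀] at hr
    have h1 : r - b < (b - a)^2 / (R - b) := by linarith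
    have h2 : (r - b) * (R - b) < (b - a)^2 := (lt_div_iff₀ hRb).mp h1
    simp only [hDdef]; nlinarith
  set h : ℝ → ℝ := fun r => (r - a) * max (r - a) 0 with hhdef
  have hnonneg : ∀ r, 0 ≤ h r := by
    intro r
    rcases le_total (r - a) 0 with h'|h'
    · simp [hhdef, max_eq_right h']
    · simp only [hhdef, max_eq_left h']
      nlinarith
  -- ζ = g on U where g r = r + (R - b) * (h r / D r)
  set g : ℝ → ℝ := fun r => r + (R - b) * (h r / D r) with hgdef
  have hkey : ∀ r ∈ U, ζ r = g r := by
    intro r hr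
    have hDne : D r ≠ 0 := ne_of_gt (hDpos r hr)
    rcases lt_or_ge r a with hra|hra
    · have : max (r - a) 0 = 0 := max_eq_right (by linarith)
      simp [hζ r, hra, hgdef, hhdef, this]
    · have hmax : max (r - a) 0 = r - a := max_eq_left (by linarith)
      rw [hζ r, if_neg (not_lt.mpr hra), hη r]
      simp only [hgdef, hhdef, hmax]
      rw [div_eq_iff (by simpa [hDdef] using hDne)]
      simp only [hDdef]
      rw [add_mul, mul_assoc, div_mul_cancel₀ _ (by simpa [hDdef] using hDne)]
      ring
  -- derivative of h
  have hh : ∀ r : ℝ, HasDerivAt h (2 * max (r - a) 0) r := by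
    intro r
    rcases lt_trichotomy r a with hra|hra|hra
    · have hmax : max (r - a) 0 = 0 := max_eq_right (by linarith)
      rw [hmax, mul_zero]
      have hev : h =ᶠ[𝓝 r] fun _ => 0 := by
        filter_upwards [Iio_mem_nhds hra] with x hx
        simp [hhdef, max_eq_right (by linarith [mem_Iio.mp hx] : x - a ≤ 0)]
      exact (hasDerivAt_const r 0).congr_of_eventuallyEq hev
    · subst hra
      have hmax : max (r - r) 0 = 0 := by simp
      rw [hmax, mul_zero]
      rw [hasDerivAt_iff_tendsto_slope]
      have hcont : Tendsto (fun x : ℝ => max (x - r) 0) (𝓝[≠] r) (𝓝 0) := by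
        have : Tendsto (fun x : ℝ => max (x - r) 0) (𝓝 r) (𝓝 (max (r - r) 0)) :=
          (Continuous.max (continuous_id.sub continuous_const) continuous_const).tendsto r
        simpa using this.mono_left nhdsWithin_le_nhds
      apply hcont.congr'
      filter_upwards [self_mem_nhdsWithin] with x hx
      have hxr : x - r ≠ 0 := sub_ne_zero.mpr hx
      simp only [slope, hhdef, vsub_eq_sub, sub_self, zero_mul, sub_zero, smul_eq_mul]
      field_simp
    · have hmax : max (r - a) 0 = r - a := max_eq_left (by linarith)
      rw [hmax]
      have hd : HasDerivAt (fun x : ℝ => (x - a) * (x - a)) (2 * (r - a)) r := by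
        have := ((hasDerivAt_id r).sub_const a).mul ((hasDerivAt_id r).sub_const a)
        simpa [two_mul, Pi.mul_def] using this
      apply hd.congr_of_eventuallyEq
      filter_upwards [Ioi_mem_nhds hra] with x hx
      simp [hhdef, max_eq_left (by linarith [mem_Ioi.mp hx] : 0 ≤ x - a)]
  -- derivative of D
  have hD : ∀ r : ℝ, HasDerivAt D (-(R - b)) r := by
    intro r
    have := (((hasDerivAt_id r).const_sub b).mul_const (R - b)).add_const ((b - a)^2)
    simpa [hDdef] using this
  -- derivative formula for ζ on U
  set φ : ℝ → ℝ := fun r =>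
    1 + (R - b) * ((2 * max (r - a) 0 * D r - h r * (-(R - b))) / (D r)^2) with hφdef
  have hder : ∀ r ∈ U, HasDerivAt ζ (φ r) r := by
    intro r hr
    have hDne : D r ≠ 0 := ne_of_gt (hDpos r hr)
    have hg : HasDerivAt g (φ r) r := by
      have hdiv := (hh r).div (hD r) hDne
      have := (hasDerivAt_id r).add (hdiv.const_mul (R - b))
      simpa [hgdef, hφdef, Pi.add_def] using this
    apply hg.congr_of_eventuallyEq
    filter_upwards [hUopen.mem_nhds hr] with x hx
    exact hkey x hx
  have hderiv : ∀ r ∈ U, deriv ζ r = φ r := fun r hr => (hder r hr).deriv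
  -- positivity of φ
  have hφpos : ∀ r ∈ U, 0 < φ r := by
    intro r hr
    have hDr := hDpos r hr
    have h1 : 0 ≤ 2 * max (r - a) 0 * D r :=
      mul_nonneg (mul_nonneg (by norm_num) (le_max_right _ _)) hDr.le
    have h2 : 0 ≤ 2 * max (r - a) 0 * D r - h r * (-(R - b)) := by
      nlinarith [hnonneg r]
    have : 0 ≤ (R - b) * ((2 * max (r - a) 0 * D r - h r * (-(R - b))) / (D r)^2) := by
      apply mul_nonneg hRb.le
      exact div_nonneg h2 (by positivity)
    simp only [hφdef]; linarith
  -- continuity of φ on U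
  have hDcont : Continuous D := by
    simp only [hDdef]
    exact ((continuous_const.sub continuous_id).mul continuous_const).add continuous_const
  have hhcont : Continuous h := by
    simp only [hhdef]
    exact (continuous_id.sub continuous_const).mul
      ((continuous_id.sub continuous_const).max continuous_const)
  have hφcont : ContinuousOn φ U := by
    apply ContinuousOn.add continuousOn_const
    apply ContinuousOn.mul continuousOn_const
    apply ContinuousOn.div
    · apply ContinuousOn.sub
      · exact ((continuous_const.mul ((continuous_id.sub continuous_const).max
          continuous_const)).mul hDcont).continuousOn
      · exact (Continuous.mul hhcont continuous_const).continuousOn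
    · exact (hDcont.pow 2).continuousOn
    · intro r hr
      exact pow_ne_zero 2 (ne_of_gt (hDpos r hr))
  -- contdiff on U
  have hCD : ContDiffOn ℝ 1 ζ U := by
    rw [show (1 : WithTop ℕ∞) = 0 + 1 by rfl, contDiffOn_succ_iff_deriv_of_isOpen hUopen]
    refine ⟨fun r hr => ((hder r hr).differentiableAt).differentiableWithinAt, ?_, ?_⟩
    · intro hω; exact absurd hω (by norm_num)
    · rw [contDiffOn_zero]
      exact hφcont.congr hderiv
  have hCDIcc : ContDiffOn ℝ 1 ζ (Icc 0 b) := hCD.mono hIccU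
  have hderivpos : ∀ r ∈ Icc (0:ℝ) b, 0 < deriv ζ r := by
    intro r hr
    rw [hderiv r (hIccU hr)]
    exact hφpos r (hIccU hr)
  have hmono : StrictMonoOn ζ (Icc 0 b) := by
    apply strictMonoOn_of_deriv_pos (convex_Icc 0 b) (hCDIcc.continuousOn)
    intro x hx
    rw [interior_Icc] at hx
    exact hderivpos x ⟨hx.1.le, hx.2.le⟩
  have hζ0 : ζ 0 = 0 := by simp [hζ 0, ha]
  refine ⟨hCDIcc, ?_, hmono, hderivpos⟩
  intro r hr
  have : ζ 0 < ζ r := hmono ⟨le_refl 0, by linarith [hr.2, hr.1]⟩ ⟨hr.1.le, hr.2⟩ hr.1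
  linarith [hζ0 ▸ this]
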